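/- For every integer ℓ ≥ 1 and every integer m with 1 ≤ m ≤ 7, the 2-partitioning function of the class of decision stumps on ℝ^ℓ satisfies π²(m) = (1/2)·Σ_{k=1}^{m−1} min{2ℓ, C(m,k)}. -/

import Mathlib

/-- A `c`-partition of a finite set `S`: a set of `c` pairwise disjoint nonempty
subsets (parts) whose union is `S`. -/
def IsPartition {α : Type*} (S : Finset α) (c : ℕ) (P : Finset (Finset α)) : Prop :=
  P.card = c ∧ (∀ p ∈ P, p.Nonempty) ∧
    (∀ p ∈ P, ∀ q ∈ P, p ≠ q → Disjoint p q) ∧ (∀ x, x ∈ S ↔ ∃ p ∈ P, x ∈ p)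

/-- A 2-partition `P = {A, S \ A}` of a sample `S ⊆ ℝ^ℓ` is realizable by a decision
stump if there are a feature `i` and threshold `θ` such that one of the two parts is
`{x ∈ S | x^i > θ}`. -/
def StumpRealizable (ℓ : ℕ) (S : Finset (Fin ℓ → ℝ))
    (P : Finset (Finset (Fin ℓ → ℝ))) : Prop :=
  IsPartition S 2 P ∧ ∃ (i : Fin ℓ) (θ : ℝ), S.filter (fun x => θ < x i) ∈ P

/-- The 2-partitioning function of the class of decision stumps on `ℝ^ℓ`:
the largest number of distinct 2-partitions realizable by a stump on a sample
of `m` points. -/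
noncomputable def stumpPi (ℓ m : ℕ) : ℕ :=
  sSup {n : ℕ | ∃ S : Finset (Fin ℓ → ℝ), S.card = m ∧
    n = {P | StumpRealizable ℓ S P}.ncard}

namespace StumpAux

open Finset

variable {ℓ : ℕ}

open Classical in
/-- The realizable "upper parts": nonempty proper subsets `A ⊆ S` such that
`{A, S \ A}` is realizable by a stump. -/
noncomputable def RS (ℓ : ℕ) (S : Finset (Fin ℓ → ℝ)) : Finset (Finset (Fin ℓ → ℝ)) :=
  S.powerset.filter (fun A => A.Nonempty ∧ A ≠ S ∧
    ∃ (i : Fin ℓ) (θ : ℝ),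
      S.filter (fun x => θ < x i) = A ∨ S.filter (fun x => θ < x i) = S \ A)

lemma mem_RS {S A : Finset (Fin ℓ → ℝ)} :
    A ∈ RS ℓ S ↔ A ⊆ S ∧ A.Nonempty ∧ A ≠ S ∧
      ∃ (i : Fin ℓ) (θ : ℝ),
        S.filter (fun x => θ < x i) = A ∨ S.filter (fun x => θ < x i) = S \ A := by
  simp [RS, Finset.mem_filter, Finset.mem_powerset]

lemma ne_sdiff_self {S A : Finset (Fin ℓ → ℝ)} (hA : A ∈ RS ℓ S) : A ≠ S \ A := by
  obtain ⟨hsub, ⟨x, hx⟩, -, -⟩ := mem_RS.mp hA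
  intro h
  have hx2 := hx
  rw [h, Finset.mem_sdiff] at hx2
  exact hx2.2 hx

lemma sdiff_mem_RS {S A : Finset (Fin ℓ → ℝ)} (hA : A ∈ RS ℓ S) : S \ A ∈ RS ℓ S := by
  obtain ⟨hsub, hne, hns, i, θ, h⟩ := mem_RS.mp hA
  refine mem_RS.mpr ⟨Finset.sdiff_subset, ?_, ?_, i, θ, ?_⟩
  · exact Finset.sdiff_nonempty.mpr (fun hSA => hns (Finset.Subset.antisymm hsub hSA))
  · intro hEq
    obtain ⟨x, hx⟩ := hne
    have hxS : x ∈ S := hsub hx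
    rw [← hEq, Finset.mem_sdiff] at hxS
    exact hxS.2 hx
  · rcases h with h | h
    · right
      rwa [Finset.sdiff_sdiff_eq_self hsub]
    · left; exact h

lemma stumpRealizable_iff {S : Finset (Fin ℓ → ℝ)} {P : Finset (Finset (Fin ℓ → ℝ))} :
    StumpRealizable ℓ S P ↔ ∃ A ∈ RS ℓ S, P = {A, S \ A} := by
  constructor
  · rintro ⟨⟨hcard, hne, hdisj, hmem⟩, i, θ, hfilt⟩
    obtain ⟨A, B, hAB, rfl⟩ := Finset.card_eq_two.mp hcard
    have hBA : B = S \ A := by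
      ext x
      simp only [Finset.mem_sdiff]
      constructor
      · intro hx
        refine ⟨(hmem x).mpr ⟨B, by simp, hx⟩, fun hxA => ?_⟩
        exact Finset.disjoint_left.mp
          (hdisj A (by simp) B (by simp) hAB) hxA hx
      · rintro ⟨hxS, hxA⟩
        obtain ⟨p, hp, hxp⟩ := (hmem x).mp hxS
        simp only [Finset.mem_insert, Finset.mem_singleton] at hp
        rcases hp with rfl | rfl
        · exact absurd hxp hxA
        · exact hxp
    subst hBA
    have hsubA : A ⊆ S := fun x hx => (hmem x).mpr ⟨A, by simp, hx⟩
    have hAne : A.Nonempty := hne A (by simp)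
    have hAns : A ≠ S := by
      rintro rfl
      obtain ⟨y, hy⟩ := hne (A \ A) (by simp)
      simp at hy
    refine ⟨A, mem_RS.mpr ⟨hsubA, hAne, hAns, i, θ, ?_⟩, rfl⟩
    simpa using hfilt
  · rintro ⟨A, hA, rfl⟩
    obtain ⟨hsub, hne, hns, i, θ, h⟩ := mem_RS.mp hA
    have hAne' : A ≠ S \ A := ne_sdiff_self hA
    refine ⟨⟨Finset.card_pair hAne', ?_, ?_, ?_⟩, i, θ, ?_⟩
    · intro p hp
      simp only [Finset.mem_insert, Finset.mem_singleton] at hp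
      rcases hp with rfl | rfl
      · exact hne
      · exact Finset.sdiff_nonempty.mpr (fun hSA => hns (Finset.Subset.antisymm hsub hSA))
    · intro p hp q hq hpq
      simp only [Finset.mem_insert, Finset.mem_singleton] at hp hq
      rcases hp with rfl | rfl <;> rcases hq with rfl | rfl
      · exact absurd rfl hpq
      · exact Finset.disjoint_sdiff
      · exact Finset.disjoint_sdiff.symm
      · exact absurd rfl hpq
    · intro x
      simp only [Finset.mem_insert, Finset.mem_singleton]
      constructor
      · intro hxS
        by_cases hxA : x ∈ A
        · exact ⟨A, Or.inl rfl, hxA⟩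
        · exact ⟨S \ A, Or.inr rfl, Finset.mem_sdiff.mpr ⟨hxS, hxA⟩⟩
      · rintro ⟨p, hp, hxp⟩
        rcases hp with rfl | rfl
        · exact hsub hxp
        · exact (Finset.mem_sdiff.mp hxp).1
    · rcases h with h | h
      · rw [h]; exact Finset.mem_insert_self _ _
      · rw [h]; exact Finset.mem_insert_of_mem (Finset.mem_singleton_self _)

open Classical in
/-- The finset of realizable 2-partitions. -/
noncomputable def PP (ℓ : ℕ) (S : Finset (Fin ℓ → ℝ)) : Finset (Finset (Finset (Fin ℓ → ℝ))) :=
  (RS ℓ S).image (fun A => ({A, S \ A} : Finset (Finset (Fin ℓ → ℝ))))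

lemma ncard_eq_PP (S : Finset (Fin ℓ → ℝ)) :
    {P | StumpRealizable ℓ S P}.ncard = (PP ℓ S).card := by
  have : {P | StumpRealizable ℓ S P} = ↑(PP ℓ S) := by
    ext P
    simp only [Set.mem_setOf_eq, stumpRealizable_iff, PP, Finset.coe_image, Set.mem_image,
      Finset.mem_coe]
    constructor
    · rintro ⟨A, hA, rfl⟩; exact ⟨A, hA, rfl⟩
    · rintro ⟨A, hA, rfl⟩; exact ⟨A, hA, rfl⟩
  rw [this, Set.ncard_coe_finset]

lemma card_RS_eq_two_mul (S : Finset (Fin ℓ → ℝ)) :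
    (RS ℓ S).card = 2 * (PP ℓ S).card := by
  classical
  rw [Finset.card_eq_sum_card_fiberwise
    (f := fun A => ({A, S \ A} : Finset (Finset (Fin ℓ → ℝ)))) (t := PP ℓ S)
    (fun A hA => Finset.mem_image_of_mem _ hA)]
  rw [Finset.sum_congr rfl (g := fun _ => 2), Finset.sum_const, smul_eq_mul, mul_comm]
  intro P hP
  obtain ⟨A₀, hA₀, rfl⟩ := Finset.mem_image.mp hP
  have hfiber : (RS ℓ S).filter
      (fun A => ({A, S \ A} : Finset (Finset (Fin ℓ → ℝ))) = {A₀, S \ A₀})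
      = {A₀, S \ A₀} := by
    ext A
    simp only [Finset.mem_filter, Finset.mem_insert, Finset.mem_singleton]
    constructor
    · rintro ⟨hA, heq⟩
      have : A ∈ ({A₀, S \ A₀} : Finset (Finset (Fin ℓ → ℝ))) := by
        rw [← heq]; exact Finset.mem_insert_self _ _
      simpa using this
    · rintro (rfl | rfl)
      · exact ⟨hA₀, rfl⟩
      · refine ⟨sdiff_mem_RS hA₀, ?_⟩
        rw [Finset.sdiff_sdiff_eq_self (mem_RS.mp hA₀).1, Finset.pair_comm]
  rw [hfiber]
  exact Finset.card_pair (ne_sdiff_self hA₀)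

lemma card_RS_eq_sum_levels {m : ℕ} (S : Finset (Fin ℓ → ℝ)) (hS : S.card = m) :
    (RS ℓ S).card =
      ∑ k ∈ Finset.Icc 1 (m - 1), ((RS ℓ S).filter (fun A => A.card = k)).card := by
  classical
  exact Finset.card_eq_sum_card_fiberwise (fun A hA => by
    obtain ⟨hsub, hne, hns, -⟩ := mem_RS.mp hA
    rw [Finset.mem_coe, Finset.mem_Icc]
    refine ⟨hne.card_pos, Nat.le_pred_of_lt ?_⟩
    rw [← hS]
    exact Finset.card_lt_card (Finset.ssubset_iff_subset_ne.mpr ⟨hsub, hns⟩))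

lemma filter_threshold_unique (S : Finset (Fin ℓ → ℝ)) (i : Fin ℓ) {θ₁ θ₂ : ℝ}
    (h : (S.filter (fun x => θ₁ < x i)).card = (S.filter (fun x => θ₂ < x i)).card) :
    S.filter (fun x => θ₁ < x i) = S.filter (fun x => θ₂ < x i) := by
  classical
  have key : ∀ (a b : ℝ), a ≤ b →
      S.filter (fun x => b < x i) ⊆ S.filter (fun x => a < x i) := by
    intro a b hab x hx
    rw [Finset.mem_filter] at hx ⊢
    exact ⟨hx.1, lt_of_le_of_lt hab hx.2⟩
  rcases le_total θ₁ θ₂ with hle | hle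
  · exact (Finset.eq_of_subset_of_card_le (key _ _ hle) h.le).symm
  · exact Finset.eq_of_subset_of_card_le (key _ _ hle) h.ge

lemma card_level_le_choose {m : ℕ} (S : Finset (Fin ℓ → ℝ)) (hS : S.card = m) (k : ℕ) :
    ((RS ℓ S).filter (fun A => A.card = k)).card ≤ m.choose k := by
  classical
  have hsub : (RS ℓ S).filter (fun A => A.card = k) ⊆ S.powersetCard k := by
    intro A hA
    rw [Finset.mem_filter] at hA
    exact Finset.mem_powersetCard.mpr ⟨(mem_RS.mp hA.1).1, hA.2⟩
  calc ((RS ℓ S).filter (fun A => A.card = k)).card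
      ≤ (S.powersetCard k).card := Finset.card_le_card hsub
    _ = m.choose k := by rw [Finset.card_powersetCard, hS]

open Classical in
lemma card_level_le_two_ell (S : Finset (Fin ℓ → ℝ)) (k : ℕ) :
    ((RS ℓ S).filter (fun A => A.card = k)).card ≤ 2 * ℓ := by
  set gT : Fin ℓ → Finset (Fin ℓ → ℝ) := fun i =>
    if h : ∃ θ : ℝ, (S.filter (fun x => θ < x i)).card = k then
      S.filter (fun x => h.choose < x i) else ∅ with hgT
  set gF : Fin ℓ → Finset (Fin ℓ → ℝ) := fun i =>
    if h : ∃ θ : ℝ, (S.filter (fun x => θ < x i)).card = S.card - k then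
      S \ S.filter (fun x => h.choose < x i) else ∅ with hgF
  have hsub : (RS ℓ S).filter (fun A => A.card = k) ⊆
      (Finset.univ.image gT) ∪ (Finset.univ.image gF) := by
    intro A hA
    rw [Finset.mem_filter] at hA
    obtain ⟨hsubA, hne, hns, i, θ, h⟩ := mem_RS.mp hA.1
    rcases h with h | h
    · apply Finset.mem_union_left
      apply Finset.mem_image.mpr
      refine ⟨i, Finset.mem_univ _, ?_⟩
      have hex : ∃ θ' : ℝ, (S.filter (fun x => θ' < x i)).card = k :=
        ⟨θ, by rw [h]; exact hA.2⟩
      rw [hgT]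
      simp only [dif_pos hex]
      rw [filter_threshold_unique S i (θ₂ := θ) (by rw [hex.choose_spec, h, hA.2]), h]
    · apply Finset.mem_union_right
      apply Finset.mem_image.mpr
      refine ⟨i, Finset.mem_univ _, ?_⟩
      have hcard' : (S.filter (fun x => θ < x i)).card = S.card - k := by
        rw [h, Finset.card_sdiff_of_subset hsubA, hA.2]
      have hex : ∃ θ' : ℝ, (S.filter (fun x => θ' < x i)).card = S.card - k :=
        ⟨θ, hcard'⟩
      rw [hgF]
      simp only [dif_pos hex]
      rw [filter_threshold_unique S i (θ₂ := θ) (by rw [hex.choose_spec, hcard']), h,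
        Finset.sdiff_sdiff_eq_self hsubA]
  calc ((RS ℓ S).filter (fun A => A.card = k)).card
      ≤ ((Finset.univ.image gT) ∪ (Finset.univ.image gF)).card := Finset.card_le_card hsub
    _ ≤ (Finset.univ.image gT).card + (Finset.univ.image gF).card := Finset.card_union_le _ _
    _ ≤ ℓ + ℓ := by
        gcongr <;> exact (Finset.card_image_le).trans (by simp)
    _ = 2 * ℓ := by ring

lemma card_RS_le {m : ℕ} (S : Finset (Fin ℓ → ℝ)) (hS : S.card = m) :
    (RS ℓ S).card ≤ ∑ k ∈ Finset.Icc 1 (m - 1), min (2 * ℓ) (m.choose k) := by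
  rw [card_RS_eq_sum_levels S hS]
  apply Finset.sum_le_sum
  intro k _
  exact le_min (card_level_le_two_ell S k) (card_level_le_choose S hS k)

/-! ### The lower-bound construction -/

/-- `Tset m v t k` is the set of indices whose rank in the `t`-th ordering is among the
top `k`. -/
def Tset (m : ℕ) (v : ℕ → Fin m → ℕ) (t k : ℕ) : Finset (Fin m) :=
  Finset.univ.filter (fun j => m - k ≤ v t j)

/-- The family of top-`k` and bottom-`k` sets of the first `t` orderings. -/
def Gset (m : ℕ) (v : ℕ → Fin m → ℕ) (t k : ℕ) : Finset (Finset (Fin m)) :=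
  ((Finset.range t).image (fun s => Tset m v s k)) ∪
    ((Finset.range t).image (fun s => (Tset m v s (m - k))ᶜ))

lemma half_lt_cast (a n : ℕ) : ((a : ℝ) - 1 / 2 < (n : ℝ)) ↔ a ≤ n := by
  constructor
  · intro h
    have : (a : ℝ) < (n : ℝ) + 1 := by linarith
    exact_mod_cast Nat.lt_add_one_iff.mp (by exact_mod_cast this)
  · intro h
    have : (a : ℝ) ≤ (n : ℝ) := by exact_mod_cast h
    linarith

lemma lower_exists (m T : ℕ) (v : ℕ → Fin m → ℕ) (hm : 1 ≤ m) (hT : 1 ≤ T)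
    (H1 : Function.Injective (v 0))
    (H2 : ∀ t < T, ∀ k < m, 1 ≤ k → (Tset m v t k).card = k)
    (H3 : ∀ t < T + 1, ∀ k < m, 1 ≤ k → (Gset m v t k).card = min (2 * t) (m.choose k))
    (H4 : ∀ k < m, 1 ≤ k → m.choose k ≤ 2 * T)
    (ℓ : ℕ) (hℓ : 1 ≤ ℓ) :
    ∃ S : Finset (Fin ℓ → ℝ), S.card = m ∧
      (RS ℓ S).card = ∑ k ∈ Finset.Icc 1 (m - 1), min (2 * ℓ) (m.choose k) := by
  classical
  set x : Fin m → (Fin ℓ → ℝ) := fun j i => (v (min (i : ℕ) (T - 1)) j : ℝ) with hx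
  have hxinj : Function.Injective x := by
    intro j j' h
    apply H1
    have h0 := congrFun h ⟨0, hℓ⟩
    simp only [hx, Nat.zero_min] at h0
    exact_mod_cast h0
  set S : Finset (Fin ℓ → ℝ) := Finset.univ.image x with hSdef
  have hScard : S.card = m := by
    rw [hSdef, Finset.card_image_of_injective _ hxinj, Finset.card_univ, Fintype.card_fin]
  refine ⟨S, hScard, ?_⟩
  -- the key filter computation
  have hfilt : ∀ (s : ℕ) (hsℓ : s < ℓ) (hsT : s < T) (k' : ℕ),
      S.filter (fun y => ((m - k' : ℕ) : ℝ) - 1 / 2 < y ⟨s, hsℓ⟩) =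
        (Tset m v s k').image x := by
    intro s hsℓ hsT k'
    rw [hSdef, Finset.filter_image]
    congr 1
    ext j
    simp only [Finset.mem_filter, Finset.mem_univ, true_and, Tset, hx]
    have hmin : min s (T - 1) = s := by omega
    rw [hmin]
    exact half_lt_cast _ _
  -- membership of the constructed sets in the levels of RS
  have hmem : ∀ k, 1 ≤ k → k ≤ m - 1 →
      (Gset m v (min ℓ T) k).image (Finset.image x) ⊆
        (RS ℓ S).filter (fun A => A.card = k) := by
    intro k hk1 hkm B hB
    obtain ⟨B₀, hB₀, rfl⟩ := Finset.mem_image.mp hB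
    have hkm' : k < m := lt_of_le_of_lt hkm (Nat.pred_lt (Nat.one_le_iff_ne_zero.mp hm))
    have hmk1 : 1 ≤ m - k := by omega
    have hmkm : m - k < m := by omega
    -- generic facts
    have hcard_of : ∀ (B₁ : Finset (Fin m)), B₁.card = k →
        ((B₁.image x).card = k ∧ B₁.image x ⊆ S ∧ (B₁.image x).Nonempty ∧ B₁.image x ≠ S) := by
      intro B₁ hB₁
      have hc : (B₁.image x).card = k := by
        rw [Finset.card_image_of_injective _ hxinj, hB₁]
      refine ⟨hc, ?_, ?_, ?_⟩
      · rw [hSdef]; exact Finset.image_subset_image (Finset.subset_univ _)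
      · rw [← Finset.card_pos, hc]; exact hk1
      · intro hEq
        rw [hEq, hScard] at hc
        omega
    rcases Finset.mem_union.mp hB₀ with hB₀ | hB₀
    · obtain ⟨s, hs, rfl⟩ := Finset.mem_image.mp hB₀
      rw [Finset.mem_range, lt_min_iff] at hs
      have hTc : (Tset m v s k).card = k := H2 s hs.2 k hkm' hk1
      obtain ⟨hc, hsubS, hne, hns⟩ := hcard_of _ hTc
      rw [Finset.mem_filter]
      refine ⟨mem_RS.mpr ⟨hsubS, hne, hns, ⟨s, hs.1⟩, ((m - k : ℕ) : ℝ) - 1 / 2, ?_⟩, hc⟩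
      left
      exact hfilt s hs.1 hs.2 k
    · obtain ⟨s, hs, rfl⟩ := Finset.mem_image.mp hB₀
      rw [Finset.mem_range, lt_min_iff] at hs
      have hTc : (Tset m v s (m - k)).card = m - k := H2 s hs.2 (m - k) hmkm hmk1
      have hcompl : ((Tset m v s (m - k))ᶜ).card = k := by
        rw [Finset.card_compl, hTc, Fintype.card_fin]
        omega
      obtain ⟨hc, hsubS, hne, hns⟩ := hcard_of _ hcompl
      rw [Finset.mem_filter]
      refine ⟨mem_RS.mpr ⟨hsubS, hne, hns, ⟨s, hs.1⟩,
        ((m - (m - k) : ℕ) : ℝ) - 1 / 2, ?_⟩, hc⟩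
      right
      rw [hfilt s hs.1 hs.2 (m - k)]
      have : S \ (Tset m v s (m - k))ᶜ.image x = (univ \ (Tset m v s (m - k))ᶜ).image x := by
        rw [hSdef, ← Finset.image_sdiff _ _ hxinj]
      rw [this, ← Finset.compl_eq_univ_sdiff, compl_compl]
  -- cardinality of the constructed family
  have hGcard : ∀ k, 1 ≤ k → k ≤ m - 1 →
      ((Gset m v (min ℓ T) k).image (Finset.image x)).card = min (2 * ℓ) (m.choose k) := by
    intro k hk1 hkm
    have hkm' : k < m := lt_of_le_of_lt hkm (Nat.pred_lt (Nat.one_le_iff_ne_zero.mp hm))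
    rw [Finset.card_image_of_injective _ (Finset.image_injective hxinj)]
    rcases le_or_gt ℓ T with hle | hlt
    · rw [Nat.min_eq_left hle]
      exact H3 ℓ (by omega) k hkm' hk1
    · rw [Nat.min_eq_right hlt.le]
      rw [H3 T (by omega) k hkm' hk1]
      rw [Nat.min_eq_right (H4 k hkm' hk1), Nat.min_eq_right ((H4 k hkm' hk1).trans (by omega))]
  -- combine
  rw [card_RS_eq_sum_levels S hScard]
  apply Finset.sum_congr rfl
  intro k hk
  rw [Finset.mem_Icc] at hk
  refine le_antisymm (le_min (card_level_le_two_ell S k) (card_level_le_choose S hScard k)) ?_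
  rw [← hGcard k hk.1 hk.2]
  exact Finset.card_le_card (hmem k hk.1 hk.2)

/-- Assembly: given construction data, compute `stumpPi`. -/
lemma main_of_data (ℓ m T : ℕ) (v : ℕ → Fin m → ℕ) (hℓ : 1 ≤ ℓ) (hm : 1 ≤ m) (hT : 1 ≤ T)
    (H1 : Function.Injective (v 0))
    (H2 : ∀ t < T, ∀ k < m, 1 ≤ k → (Tset m v t k).card = k)
    (H3 : ∀ t < T + 1, ∀ k < m, 1 ≤ k → (Gset m v t k).card = min (2 * t) (m.choose k))
    (H4 : ∀ k < m, 1 ≤ k → m.choose k ≤ 2 * T) :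
    (stumpPi ℓ m : ℝ) =
      (1 / 2) * ∑ k ∈ Finset.Icc 1 (m - 1), (min (2 * ℓ) (m.choose k) : ℝ) := by
  set N : ℕ := ∑ k ∈ Finset.Icc 1 (m - 1), min (2 * ℓ) (m.choose k) with hN
  obtain ⟨S₀, hS₀card, hS₀⟩ := lower_exists m T v hm hT H1 H2 H3 H4 ℓ hℓ
  set Nset : Set ℕ := {n : ℕ | ∃ S : Finset (Fin ℓ → ℝ), S.card = m ∧
    n = {P | StumpRealizable ℓ S P}.ncard} with hNset
  have hub : ∀ n ∈ Nset, 2 * n ≤ N := by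
    rintro n ⟨S, hScard, rfl⟩
    rw [ncard_eq_PP, ← card_RS_eq_two_mul]
    exact card_RS_le S hScard
  have hn₀mem : (PP ℓ S₀).card ∈ Nset := ⟨S₀, hS₀card, (ncard_eq_PP S₀).symm⟩
  have hn₀ : 2 * (PP ℓ S₀).card = N := by
    rw [← card_RS_eq_two_mul]; exact hS₀
  have hgreat : IsGreatest Nset ((PP ℓ S₀).card) := by
    refine ⟨hn₀mem, fun n hn => ?_⟩
    have := hub n hn
    omega
  have hsup : stumpPi ℓ m = (PP ℓ S₀).card := by
    rw [stumpPi]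
    exact hgreat.csSup_eq
  rw [hsup]
  have hcast : ((N : ℕ) : ℝ) = ∑ k ∈ Finset.Icc 1 (m - 1), (min (2 * ℓ) (m.choose k) : ℝ) := by
    rw [hN]
    push_cast [Nat.cast_min]
    rfl
  have h2 : 2 * ((PP ℓ S₀).card : ℝ) = (N : ℝ) := by exact_mod_cast congrArg Nat.cast hn₀
  rw [← hcast]
  linarith

/-! ### Explicit ranking data for `m ≤ 7` -/

def v1 : ℕ → Fin 1 → ℕ := fun _ => ![0]

def v2 : ℕ → Fin 2 → ℕ := fun _ => ![1, 0]

def v3 : ℕ → Fin 3 → ℕ := fun t =>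
  match t with
  | 0 => ![0, 1, 2]
  | _ => ![0, 2, 1]

def v4 : ℕ → Fin 4 → ℕ := fun t =>
  match t with
  | 0 => ![0, 3, 1, 2]
  | 1 => ![2, 1, 0, 3]
  | _ => ![1, 0, 3, 2]

def v5 : ℕ → Fin 5 → ℕ := fun t =>
  match t with
  | 0 => ![0, 1, 3, 4, 2]
  | 1 => ![2, 0, 1, 3, 4]
  | 2 => ![3, 2, 0, 4, 1]
  | 3 => ![0, 4, 2, 3, 1]
  | _ => ![0, 4, 1, 2, 3]

def v6 : ℕ → Fin 6 → ℕ := fun t =>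
  match t with
  | 0 => ![1, 4, 5, 0, 3, 2]
  | 1 => ![0, 4, 3, 2, 1, 5]
  | 2 => ![2, 0, 3, 1, 5, 4]
  | 3 => ![4, 5, 0, 1, 2, 3]
  | 4 => ![0, 5, 1, 2, 4, 3]
  | 5 => ![2, 3, 0, 5, 1, 4]
  | 6 => ![1, 3, 2, 4, 5, 0]
  | 7 => ![3, 5, 0, 2, 4, 1]
  | 8 => ![0, 4, 5, 3, 1, 2]
  | _ => ![0, 1, 2, 4, 3, 5]

def v7 : ℕ → Fin 7 → ℕ := fun t =>
  match t with
  | 0 => ![0, 5, 4, 3, 1, 6, 2]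
  | 1 => ![4, 0, 6, 5, 1, 3, 2]
  | 2 => ![4, 2, 3, 0, 1, 5, 6]
  | 3 => ![3, 6, 2, 5, 0, 1, 4]
  | 4 => ![6, 5, 1, 2, 4, 3, 0]
  | 5 => ![3, 4, 6, 1, 5, 0, 2]
  | 6 => ![1, 2, 0, 3, 6, 4, 5]
  | 7 => ![0, 5, 6, 4, 2, 1, 3]
  | 8 => ![2, 3, 1, 6, 4, 0, 5]
  | 9 => ![5, 1, 2, 6, 4, 3, 0]
  | 10 => ![6, 2, 4, 0, 3, 1, 5]
  | 11 => ![0, 2, 6, 5, 4, 1, 3]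
  | 12 => ![5, 0, 6, 3, 4, 1, 2]
  | 13 => ![1, 4, 3, 0, 5, 6, 2]
  | 14 => ![1, 2, 3, 5, 4, 6, 0]
  | 15 => ![5, 3, 0, 4, 2, 6, 1]
  | 16 => ![2, 0, 5, 1, 3, 6, 4]
  | _ => ![4, 3, 2, 1, 6, 0, 5]

end StumpAux

theorem stump_two_partitioning_eq_of_small_m
    (ℓ m : ℕ) (hℓ : 1 ≤ ℓ) (hm : 1 ≤ m) (hm7 : m ≤ 7) :
    (stumpPi ℓ m : ℝ) =
      (1 / 2) * ∑ k ∈ Finset.Icc 1 (m - 1), (min (2 * ℓ) (m.choose k) : ℝ) := by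
  interval_cases m
  · exact StumpAux.main_of_data ℓ 1 1 StumpAux.v1 hℓ (by norm_num) (by norm_num)
      (by decide) (by decide) (by decide) (by decide)
  · exact StumpAux.main_of_data ℓ 2 1 StumpAux.v2 hℓ (by norm_num) (by norm_num)
      (by decide) (by decide) (by decide) (by decide)
  · exact StumpAux.main_of_data ℓ 3 2 StumpAux.v3 hℓ (by norm_num) (by norm_num)
      (by decide) (by decide) (by decide) (by decide)
  · exact StumpAux.main_of_data ℓ 4 3 StumpAux.v4 hℓ (by norm_num) (by norm_num)
      (by decide) (by decide) (by decide) (by decide)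
  · exact StumpAux.main_of_data ℓ 5 5 StumpAux.v5 hℓ (by norm_num) (by norm_num)
      (by decide) (by decide) (by decide) (by decide)
  · exact StumpAux.main_of_data ℓ 6 10 StumpAux.v6 hℓ (by norm_num) (by norm_num)
      (by decide) (by decide) (by decide) (by decide)
  · exact StumpAux.main_of_data ℓ 7 18 StumpAux.v7 hℓ (by norm_num) (by norm_num)
      (by decide) (by decide) (by decide) (by decide)
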